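/- Let Φ : ℝ → ℝ be strictly convex and differentiable with Φ'(0) = 0, let f : [0,1]×ℝ×ℝ → ℝ be continuous and suppose there exists R > 0 such that x·f(t,x,0) > 0 whenever |x| > R. Let λ ∈ (0,1] and let u : [0,1] → ℝ be continuously differentiable such that t ↦ Φ'(u̇(t)) is differentiable on [0,1] with derivative λ·f(t, u(t), u̇(t)). If the function |u| achieves its maximum over [0,1] at some point t₀ ∈ (0,1), then |u(t)| ≤ R for all t ∈ [0,1]. -/
import Mathlib


open Set Filter Topology

/-- Auxiliary: the case where the interior maximum value is positive leads to a
contradiction if it exceeds `R`. -/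
lemma interior_max_bound_aux
    (Φ : ℝ → ℝ) (hΦconv : StrictConvexOn ℝ Set.univ Φ)
    (hΦdiff : Differentiable ℝ Φ) (hΦ'0 : deriv Φ 0 = 0)
    (f : ℝ → ℝ → ℝ → ℝ)
    (R : ℝ) (hR : 0 < R)
    (hsign : ∀ t ∈ Icc (0:ℝ) 1, ∀ x : ℝ, R < |x| → 0 < x * f t x 0)
    (lam : ℝ) (hlam : lam ∈ Ioc (0:ℝ) 1)
    (u u' : ℝ → ℝ)
    (hu : ∀ t ∈ Icc (0:ℝ) 1, HasDerivWithinAt u (u' t) (Icc (0:ℝ) 1) t)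
    (heq : ∀ t ∈ Icc (0:ℝ) 1,
      HasDerivWithinAt (fun s => deriv Φ (u' s)) (lam * f t (u t) (u' t))
        (Icc (0:ℝ) 1) t)
    (t₀ : ℝ) (ht₀ : t₀ ∈ Ioo (0:ℝ) 1)
    (hmax : ∀ t ∈ Icc (0:ℝ) 1, |u t| ≤ |u t₀|)
    (hpos : R < u t₀) : False := by
  have ht₀I : t₀ ∈ Icc (0:ℝ) 1 := Ioo_subset_Icc_self ht₀
  have hmono : StrictMono (deriv Φ) := by
    have h := hΦconv.strictMonoOn_deriv (fun x _ => (hΦdiff x))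
    exact fun x y hxy => h (mem_univ x) (mem_univ y) hxy
  have hnhds : Icc (0:ℝ) 1 ∈ 𝓝 t₀ := Icc_mem_nhds ht₀.1 ht₀.2
  have habs : |u t₀| = u t₀ := abs_of_pos (hR.trans hpos)
  -- u' t₀ = 0 at the interior local maximum of u
  have hloc : IsLocalMax u t₀ := by
    filter_upwards [hnhds] with t ht
    calc u t ≤ |u t| := le_abs_self _
      _ ≤ |u t₀| := hmax t ht
      _ = u t₀ := habs
  have hder : HasDerivAt u (u' t₀) t₀ := (hu t₀ ht₀I).hasDerivAt hnhds
  have hu'0 : u' t₀ = 0 := hloc.hasDerivAt_eq_zero hder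
  -- the derivative of t ↦ Φ'(u'(t)) at t₀ is positive
  have hf0 : 0 < f t₀ (u t₀) 0 := by
    have h := hsign t₀ ht₀I (u t₀) (by rw [habs]; exact hpos)
    nlinarith [hR.trans hpos]
  have hcpos : 0 < lam * f t₀ (u t₀) (u' t₀) := by
    rw [hu'0]; exact mul_pos hlam.1 hf0
  have hgd : HasDerivAt (fun s => deriv Φ (u' s)) (lam * f t₀ (u t₀) (u' t₀)) t₀ :=
    (heq t₀ ht₀I).hasDerivAt hnhds
  have hg0 : deriv Φ (u' t₀) = 0 := by rw [hu'0, hΦ'0]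
  have hslope : Tendsto (slope (fun s => deriv Φ (u' s)) t₀) (𝓝[≠] t₀)
      (𝓝 (lam * f t₀ (u t₀) (u' t₀))) := hasDerivAt_iff_tendsto_slope.mp hgd
  have hslope' : Tendsto (slope (fun s => deriv Φ (u' s)) t₀) (𝓝[>] t₀)
      (𝓝 (lam * f t₀ (u t₀) (u' t₀))) :=
    hslope.mono_left (nhdsWithin_mono _ (fun x hx => by
      simp only [mem_compl_iff, mem_singleton_iff]
      exact ne_of_gt hx))
  have hev : ∀ᶠ t in 𝓝[>] t₀, 0 < slope (fun s => deriv Φ (u' s)) t₀ t :=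
    hslope'.eventually (eventually_gt_nhds hcpos)
  rcases mem_nhdsGT_iff_exists_Ioo_subset.mp hev with ⟨ε, hε, hsub⟩
  rw [mem_Ioi] at hε
  set t₁ : ℝ := min ((t₀ + ε) / 2) ((t₀ + 1) / 2) with ht₁def
  have h01 : t₀ < t₁ := lt_min (by linarith) (by linarith [ht₀.2])
  have ht₁ε : t₁ < ε := (min_le_left _ _).trans_lt (by linarith)
  have ht₁1 : t₁ < 1 := (min_le_right _ _).trans_lt (by linarith [ht₀.2])
  have hsubIcc : Icc t₀ t₁ ⊆ Icc (0:ℝ) 1 := Icc_subset_Icc ht₀.1.le ht₁1.le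
  -- u' > 0 on (t₀, t₁]
  have hupos : ∀ t ∈ Ioc t₀ t₁, 0 < u' t := by
    intro t ht
    have hsl := hsub ⟨ht.1, lt_of_le_of_lt ht.2 ht₁ε⟩
    simp only [Set.mem_setOf_eq] at hsl
    rw [slope_def_field, hg0, sub_zero] at hsl
    have htpos : 0 < t - t₀ := sub_pos.mpr ht.1
    have hgt : 0 < deriv Φ (u' t) := by
      rcases div_pos_iff.mp hsl with h | h
      · exact h.1
      · linarith [h.2]
    have : deriv Φ 0 < deriv Φ (u' t) := by rw [hΦ'0]; exact hgt
    exact hmono.lt_iff_lt.mp this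
  -- u is strictly increasing on [t₀, t₁]
  have hcont : ContinuousOn u (Icc t₀ t₁) := fun t ht =>
    ((hu t (hsubIcc ht)).continuousWithinAt).mono hsubIcc
  have hderiv : ∀ t ∈ interior (Icc t₀ t₁), 0 < deriv u t := by
    rw [interior_Icc]
    intro t ht
    have htI : t ∈ Icc (0:ℝ) 1 := hsubIcc (Ioo_subset_Icc_self ht)
    have hda : HasDerivAt u (u' t) t :=
      (hu t htI).hasDerivAt (Icc_mem_nhds (lt_trans ht₀.1 ht.1) (lt_trans ht.2 ht₁1))
    rw [hda.deriv]
    exact hupos t ⟨ht.1, ht.2.le⟩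
  have hmonoU := strictMonoOn_of_deriv_pos (convex_Icc t₀ t₁) hcont hderiv
  have h1 : u t₀ < u t₁ :=
    hmonoU (left_mem_Icc.mpr h01.le) (right_mem_Icc.mpr h01.le) h01
  have h2 : u t₁ ≤ u t₀ :=
    (le_abs_self _).trans ((hmax t₁ (hsubIcc (right_mem_Icc.mpr h01.le))).trans_eq habs)
  linarith

/-- Lemma 4.1: if a solution `u` of `d/dt Φ'(u̇) = λ f(t,u,u̇)` is such that `|u|`
achieves its maximum at an interior point `t₀ ∈ (0,1)`, then `|u(t)| ≤ R` on `[0,1]`. -/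
theorem interior_max_bound
    (Φ : ℝ → ℝ) (hΦconv : StrictConvexOn ℝ Set.univ Φ)
    (hΦdiff : Differentiable ℝ Φ) (hΦ'0 : deriv Φ 0 = 0)
    (f : ℝ → ℝ → ℝ → ℝ)
    (hf : Continuous fun p : ℝ × ℝ × ℝ => f p.1 p.2.1 p.2.2)
    (R : ℝ) (hR : 0 < R)
    (hsign : ∀ t ∈ Icc (0:ℝ) 1, ∀ x : ℝ, R < |x| → 0 < x * f t x 0)
    (lam : ℝ) (hlam : lam ∈ Ioc (0:ℝ) 1)
    (u u' : ℝ → ℝ)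
    (hu : ∀ t ∈ Icc (0:ℝ) 1, HasDerivWithinAt u (u' t) (Icc (0:ℝ) 1) t)
    (hu' : ContinuousOn u' (Icc (0:ℝ) 1))
    (heq : ∀ t ∈ Icc (0:ℝ) 1,
      HasDerivWithinAt (fun s => deriv Φ (u' s)) (lam * f t (u t) (u' t))
        (Icc (0:ℝ) 1) t)
    (t₀ : ℝ) (ht₀ : t₀ ∈ Ioo (0:ℝ) 1)
    (hmax : ∀ t ∈ Icc (0:ℝ) 1, |u t| ≤ |u t₀|) :
    ∀ t ∈ Icc (0:ℝ) 1, |u t| ≤ R := by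
  intro t ht
  refine (hmax t ht).trans ?_
  by_contra hcon
  push_neg at hcon
  rcases lt_or_ge 0 (u t₀) with hsgn | hsgn
  · -- positive case
    have hpos : R < u t₀ := by rwa [abs_of_pos hsgn] at hcon
    exact interior_max_bound_aux Φ hΦconv hΦdiff hΦ'0 f R hR hsign lam hlam u u' hu heq
      t₀ ht₀ hmax hpos
  · -- negative case: apply the auxiliary lemma to the reflected problem
    have hneg : u t₀ < 0 := by
      rcases lt_or_eq_of_le hsgn with h | h
      · exact h
      · rw [h] at hcon; simp at hcon; linarith
    set Ψ : ℝ → ℝ := fun x => Φ (-x) with hΨdef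
    have hΨd : ∀ x, deriv Ψ x = -deriv Φ (-x) := fun x => deriv_comp_neg Φ x
    have hΨconv : StrictConvexOn ℝ Set.univ Ψ := by
      refine ⟨convex_univ, ?_⟩
      intro x _ y _ hxy a b ha hb hab
      have key := hΦconv.2 (mem_univ (-x)) (mem_univ (-y))
        (fun h => hxy (neg_injective h)) ha hb hab
      have e1 : a • (-x) + b • (-y) = -(a • x + b • y) := by
        simp [smul_eq_mul]; ring
      rw [e1] at key
      simpa [hΨdef, smul_eq_mul] using key
    have hΨdiff : Differentiable ℝ Ψ := hΦdiff.comp differentiable_neg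
    have hΨ'0 : deriv Ψ 0 = 0 := by rw [hΨd]; simp [hΦ'0]
    set g : ℝ → ℝ → ℝ → ℝ := fun t x y => -f t (-x) (-y) with hgdef
    have hgsign : ∀ t ∈ Icc (0:ℝ) 1, ∀ x : ℝ, R < |x| → 0 < x * g t x 0 := by
      intro t htI x hx
      have := hsign t htI (-x) (by rwa [abs_neg])
      simp only [hgdef, neg_zero]
      nlinarith
    have hv : ∀ t ∈ Icc (0:ℝ) 1,
        HasDerivWithinAt (fun s => -u s) (-u' t) (Icc (0:ℝ) 1) t :=
      fun t htI => (hu t htI).neg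
    have heqv : ∀ t ∈ Icc (0:ℝ) 1,
        HasDerivWithinAt (fun s => deriv Ψ (-u' s))
          (lam * g t (-u t) (-u' t)) (Icc (0:ℝ) 1) t := by
      intro t htI
      have h1 := (heq t htI).neg
      have e : (fun s => deriv Ψ (-u' s)) = fun s => -deriv Φ (u' s) := by
        funext s; rw [hΨd]; simp
      rw [e]
      have e2 : lam * g t (-u t) (-u' t) = -(lam * f t (u t) (u' t)) := by
        simp [hgdef]
      rw [e2]
      exact h1
    have hmaxv : ∀ t ∈ Icc (0:ℝ) 1, |(-u t)| ≤ |(-u t₀)| := by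
      intro s hs; rw [abs_neg, abs_neg]; exact hmax s hs
    have hposv : R < -u t₀ := by rwa [abs_of_neg hneg] at hcon
    exact interior_max_bound_aux Ψ hΨconv hΨdiff hΨ'0 g R hR hgsign lam hlam
      (fun s => -u s) (fun s => -u' s) hv heqv t₀ ht₀ hmaxv hposv
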